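/- arXiv:1704.06777 — 2 statements merged into one kernel-verified Lean document; each statement's English description precedes it below -/
import Mathlib

section
/- Let B > 0, a₀, a₁ > 0, λ₂, λ₃ ≥ 0 with λ₂ + λ₃ > 0, and define f(P) = P − λ₂ B log2(1 + a₀ P) − λ₃ B log2(1 + a₁ P) for P ≥ 0. Define u = (ln2/B) a₀ a₁, v = (ln2/B)(a₀ + a₁) − (λ₂ + λ₃) a₀ a₁, w = ln2/B − λ₂ a₀ − λ₃ a₁. If w < 0, then f is convex on [0, ∞), u > 0, v² − 4uw > 0, and the unique stationary point of f on (0, ∞) is P* = (sqrt(v² − 4uw) − v) / (2u), which is the unique unconstrained minimizer of f. -/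
set_option maxHeartbeats 1000000

/-- Lemma 2 structure: for `f(P) = P − λ₂ B log2(1+a₀P) − λ₃ B log2(1+a₁P)`
with `w < 0`, `f` is convex on `[0,∞)`, `u > 0`, `v² − 4uw > 0`, and
`P* = (√(v²−4uw) − v)/(2u)` is the unique stationary point of `f` on `(0,∞)`
and the unique unconstrained minimizer of `f` on `[0,∞)`. -/
theorem stmt_7 (B a₀ a₁ lam₂ lam₃ : ℝ) (hB : 0 < B) (ha₀ : 0 < a₀)
    (ha₁ : 0 < a₁) (hl₂ : 0 ≤ lam₂) (hl₃ : 0 ≤ lam₃) (hl : 0 < lam₂ + lam₃)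
    (f : ℝ → ℝ)
    (hf : f = fun P : ℝ =>
      P - lam₂ * B * Real.logb 2 (1 + a₀ * P) - lam₃ * B * Real.logb 2 (1 + a₁ * P))
    (u v w : ℝ)
    (hu : u = Real.log 2 / B * (a₀ * a₁))
    (hv : v = Real.log 2 / B * (a₀ + a₁) - (lam₂ + lam₃) * (a₀ * a₁))
    (hw : w = Real.log 2 / B - lam₂ * a₀ - lam₃ * a₁)
    (hwneg : w < 0) :
    ConvexOn ℝ (Set.Ici (0 : ℝ)) f ∧ 0 < u ∧ 0 < v ^ 2 - 4 * u * w ∧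
      (∀ P ∈ Set.Ioi (0 : ℝ),
        deriv f P = 0 ↔ P = (Real.sqrt (v ^ 2 - 4 * u * w) - v) / (2 * u)) ∧
      (∀ P ∈ Set.Ici (0 : ℝ),
        P ≠ (Real.sqrt (v ^ 2 - 4 * u * w) - v) / (2 * u) →
          f ((Real.sqrt (v ^ 2 - 4 * u * w) - v) / (2 * u)) < f P) := by
  have hlog2 : 0 < Real.log 2 := Real.log_pos one_lt_two
  have hupos : 0 < u := by rw [hu]; positivity
  have hDpos : 0 < v ^ 2 - 4 * u * w := by nlinarith [sq_nonneg v]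
  set s := Real.sqrt (v ^ 2 - 4 * u * w) with hs
  set Pstar := (s - v) / (2 * u) with hPs
  have hs2 : s ^ 2 = v ^ 2 - 4 * u * w := Real.sq_sqrt hDpos.le
  have hsabs : |v| < s := by
    have h1 : |v| = Real.sqrt (v ^ 2) := (Real.sqrt_sq_eq_abs v).symm
    rw [h1, hs]
    exact Real.sqrt_lt_sqrt (sq_nonneg v) (by nlinarith)
  have hvs : v < s := lt_of_le_of_lt (le_abs_self v) hsabs
  have hnvs : -s < v := neg_lt_of_neg_lt (lt_of_le_of_lt (neg_le_abs v) hsabs)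
  have hPpos : 0 < Pstar := div_pos (by linarith) (by linarith)
  have hroot : u * Pstar ^ 2 + v * Pstar + w = 0 := by
    rw [hPs]
    field_simp
    nlinarith [hs2]
  have gfact : ∀ P : ℝ, u * P ^ 2 + v * P + w = (P - Pstar) * (u * P + u * Pstar + v) := by
    intro P
    linear_combination hroot
  have hlin : ∀ P : ℝ, 0 ≤ P → 0 < u * P + u * Pstar + v := by
    intro P hP
    have h1 : u * Pstar + v = (s + v) / 2 := by rw [hPs]; field_simp; ring
    nlinarith [mul_nonneg hupos.le hP]
  -- explicit derivative
  set F : ℝ → ℝ := fun P =>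
    1 - lam₂ * B * (a₀ / (1 + a₀ * P) / Real.log 2)
      - lam₃ * B * (a₁ / (1 + a₁ * P) / Real.log 2) with hF
  have key : ∀ P : ℝ, 0 ≤ P → HasDerivAt f (F P) P := by
    intro P hP
    have h0 : (0:ℝ) < 1 + a₀ * P := by positivity
    have h1 : (0:ℝ) < 1 + a₁ * P := by positivity
    have d0 : HasDerivAt (fun x : ℝ => 1 + a₀ * x) a₀ P := by
      simpa using ((hasDerivAt_id P).const_mul a₀).const_add 1
    have d1 : HasDerivAt (fun x : ℝ => 1 + a₁ * x) a₁ P := by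
      simpa using ((hasDerivAt_id P).const_mul a₁).const_add 1
    have e0 : HasDerivAt (fun x : ℝ => Real.log (1 + a₀ * x)) (a₀ / (1 + a₀ * P)) P :=
      d0.log h0.ne'
    have e1 : HasDerivAt (fun x : ℝ => Real.log (1 + a₁ * x)) (a₁ / (1 + a₁ * P)) P :=
      d1.log h1.ne'
    have main : HasDerivAt (fun x : ℝ =>
        x - lam₂ * B * (Real.log (1 + a₀ * x) / Real.log 2)
          - lam₃ * B * (Real.log (1 + a₁ * x) / Real.log 2)) (F P) P := by
      exact
        (((hasDerivAt_id P).sub ((e0.div_const (Real.log 2)).const_mul (lam₂ * B))).sub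
          ((e1.div_const (Real.log 2)).const_mul (lam₃ * B)))
    have hfeq : f = fun x : ℝ =>
        x - lam₂ * B * (Real.log (1 + a₀ * x) / Real.log 2)
          - lam₃ * B * (Real.log (1 + a₁ * x) / Real.log 2) := by
      rw [hf]; funext x; simp [Real.logb]
    rw [hfeq]
    exact main
  have derivEq : ∀ P : ℝ, 0 ≤ P → deriv f P = F P := fun P hP => (key P hP).deriv
  have ident : ∀ P : ℝ, 0 ≤ P →
      F P * (Real.log 2 / B * ((1 + a₀ * P) * (1 + a₁ * P))) = u * P ^ 2 + v * P + w := by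
    intro P hP
    have h0 : (0:ℝ) < 1 + a₀ * P := by positivity
    have h1 : (0:ℝ) < 1 + a₁ * P := by positivity
    rw [hF, hu, hv, hw]
    field_simp
    ring
  have hMpos : ∀ P : ℝ, 0 ≤ P → 0 < Real.log 2 / B * ((1 + a₀ * P) * (1 + a₁ * P)) := by
    intro P hP; positivity
  -- sign of F
  have Fsign : ∀ P : ℝ, 0 ≤ P →
      (P < Pstar → F P < 0) ∧ (Pstar < P → 0 < F P) := by
    intro P hP
    have hid := ident P hP
    have hM := hMpos P hP
    have hg : u * P ^ 2 + v * P + w = (P - Pstar) * (u * P + u * Pstar + v) := gfact P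
    have hlin' := hlin P hP
    constructor
    · intro hlt
      have hgneg : (P - Pstar) * (u * P + u * Pstar + v) < 0 :=
        mul_neg_of_neg_of_pos (by linarith) hlin'
      by_contra hcon
      push_neg at hcon
      have : 0 ≤ F P * (Real.log 2 / B * ((1 + a₀ * P) * (1 + a₁ * P))) :=
        mul_nonneg hcon hM.le
      rw [hid, hg] at this
      linarith
    · intro hlt
      have hgpos : 0 < (P - Pstar) * (u * P + u * Pstar + v) :=
        mul_pos (by linarith) hlin'
      by_contra hcon
      push_neg at hcon
      have : F P * (Real.log 2 / B * ((1 + a₀ * P) * (1 + a₁ * P))) ≤ 0 :=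
        mul_nonpos_of_nonpos_of_nonneg hcon hM.le
      rw [hid, hg] at this
      linarith
  -- continuity / differentiability
  have hcont : ContinuousOn f (Set.Ici 0) := fun x hx =>
    (key x hx).continuousAt.continuousWithinAt
  have hdiff : DifferentiableOn ℝ f (interior (Set.Ici (0:ℝ))) := by
    rw [interior_Ici]
    exact fun x hx => (key x (le_of_lt hx)).differentiableAt.differentiableWithinAt
  -- convexity via monotone derivative
  have hmono : MonotoneOn (deriv f) (interior (Set.Ici (0:ℝ))) := by
    rw [interior_Ici]
    intro x hx y hy hxy
    have hx' : (0:ℝ) < x := hx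
    have hy' : (0:ℝ) < y := hy
    rw [derivEq x hx'.le, derivEq y hy'.le, hF]
    have hx0 : (0:ℝ) < 1 + a₀ * x := by positivity
    have hy0 : (0:ℝ) < 1 + a₀ * y := by positivity
    have hx1 : (0:ℝ) < 1 + a₁ * x := by positivity
    have hy1 : (0:ℝ) < 1 + a₁ * y := by positivity
    have t0 : a₀ / (1 + a₀ * y) / Real.log 2 ≤ a₀ / (1 + a₀ * x) / Real.log 2 := by
      gcongr
    have t1 : a₁ / (1 + a₁ * y) / Real.log 2 ≤ a₁ / (1 + a₁ * x) / Real.log 2 := by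
      gcongr
    have c0 : 0 ≤ lam₂ * B := by positivity
    have c1 : 0 ≤ lam₃ * B := by positivity
    linarith [mul_le_mul_of_nonneg_left t0 c0, mul_le_mul_of_nonneg_left t1 c1]
  have hconv : ConvexOn ℝ (Set.Ici (0:ℝ)) f :=
    hmono.convexOn_of_deriv (convex_Ici 0) hcont hdiff
  refine ⟨hconv, hupos, hDpos, ?_, ?_⟩
  · intro P hP
    have hP' : (0:ℝ) < P := hP
    rw [derivEq P hP'.le]
    constructor
    · intro h0
      have hid := ident P hP'.le
      rw [h0, zero_mul] at hid
      have hg := gfact P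
      have hlin' := hlin P hP'.le
      have : (P - Pstar) * (u * P + u * Pstar + v) = 0 := by linarith [hg, hid.symm]
      rcases mul_eq_zero.mp this with h | h
      · linarith [sub_eq_zero.mp h]
      · linarith
    · intro h
      subst h
      have hid := ident Pstar hPpos.le
      have hM := hMpos Pstar hPpos.le
      have : F Pstar * (Real.log 2 / B * ((1 + a₀ * Pstar) * (1 + a₁ * Pstar))) = 0 := by
        rw [hid]; linarith [hroot]
      exact (mul_eq_zero.mp this).resolve_right hM.ne'
  · intro P hP hne
    have hP0 : (0:ℝ) ≤ P := hP
    rcases lt_or_gt_of_ne hne with hlt | hgt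
    · -- P < Pstar : f strictly decreasing on [0, Pstar]
      have hanti : StrictAntiOn f (Set.Icc 0 Pstar) := by
        apply strictAntiOn_of_deriv_neg (convex_Icc 0 Pstar)
          (hcont.mono (Set.Icc_subset_Ici_self))
        intro x hx
        rw [interior_Icc] at hx
        rw [derivEq x hx.1.le]
        exact ((Fsign x hx.1.le).1 hx.2)
      exact hanti ⟨hP0, hlt.le⟩ ⟨hPpos.le, le_refl _⟩ hlt
    · -- Pstar < P : f strictly increasing on [Pstar, ∞)
      have hmono' : StrictMonoOn f (Set.Ici Pstar) := by
        apply strictMonoOn_of_deriv_pos (convex_Ici Pstar)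
          (hcont.mono (Set.Ici_subset_Ici.mpr hPpos.le))
        intro x hx
        rw [interior_Ici] at hx
        have hx0 : 0 ≤ x := le_of_lt (lt_trans hPpos hx)
        rw [derivEq x hx0]
        exact ((Fsign x hx0).2 hx)
      exact hmono' (Set.self_mem_Ici) hgt.le hgt
end

section
/- Let r₀₁, B be as follows: r₀₁(P) = B log2(1 + aP) with B, a > 0. For fixed μ₁ ≥ 0, λ₁ ≥ 0, μ₂ ∈ ℝ, κ, c, T, f_max, P_max > 0, consider minimizing G(E, τ, l) = E + μ₁ τ − λ₁ τ r₀₁(E/τ) + κ c³ l³/(T−τ)² + (λ₁ − μ₂) l subject to 0 ≤ E ≤ τ P_max, 0 ≤ τ < T, 0 ≤ l, c l ≤ (T−τ) f_max (with the convention τ r₀₁(E/τ) = 0 and E = 0 when τ = 0). Then G is jointly convex on this feasible set. -/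
open Set

/-- Perspective construction: if `f` is convex on `[0,∞)` and `x, t` are affine
functionals on a convex set `S` with `x ≥ 0`, `t ≥ 0`, and `t = 0 → x = 0` on `S`,
then `p ↦ t p * f (x p / t p)` is convex on `S`. -/
lemma perspective_general {f : ℝ → ℝ} (hf : ConvexOn ℝ (Set.Ici 0) f)
    {S : Set (ℝ × ℝ × ℝ)} (hS : Convex ℝ S) (x t : ℝ × ℝ × ℝ → ℝ)
    (hlin : ∀ p q : ℝ × ℝ × ℝ, ∀ a b : ℝ, 0 ≤ a → 0 ≤ b → a + b = 1 →
      x (a • p + b • q) = a * x p + b * x q ∧ t (a • p + b • q) = a * t p + b * t q)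
    (hmem : ∀ p ∈ S, 0 ≤ x p ∧ 0 ≤ t p ∧ (t p = 0 → x p = 0)) :
    ConvexOn ℝ S (fun p => t p * f (x p / t p)) := by
  refine ⟨hS, ?_⟩
  intro p hp q hq a b ha hb hab
  obtain ⟨hxp, htp, hzp⟩ := hmem p hp
  obtain ⟨hxq, htq, hzq⟩ := hmem q hq
  obtain ⟨hxE, htE⟩ := hlin p q a b ha hb hab
  simp only [smul_eq_mul]
  rw [hxE, htE]
  have hatp : 0 ≤ a * t p := mul_nonneg ha htp
  have hbtq : 0 ≤ b * t q := mul_nonneg hb htq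
  set u₁ := x p / t p with hu₁def
  set u₂ := x q / t q with hu₂def
  have hp1 : x p = t p * u₁ := by
    rcases eq_or_ne (t p) 0 with h | h
    · simp [h, hzp h]
    · rw [hu₁def, mul_div_cancel₀ _ h]
  have hq1 : x q = t q * u₂ := by
    rcases eq_or_ne (t q) 0 with h | h
    · simp [h, hzq h]
    · rw [hu₂def, mul_div_cancel₀ _ h]
  by_cases ht : a * t p + b * t q = 0
  · have h1 : a * t p = 0 := by linarith
    have h2 : b * t q = 0 := by linarith
    have h3 : a * x p = 0 := by
      rcases mul_eq_zero.1 h1 with h | h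
      · simp [h]
      · simp [hzp h]
    have h4 : b * x q = 0 := by
      rcases mul_eq_zero.1 h2 with h | h
      · simp [h]
      · simp [hzq h]
    have l0 : a * x p + b * x q = 0 := by rw [h3, h4]; ring
    have r1 : a * (t p * f u₁) = 0 := by rw [← mul_assoc, h1, zero_mul]
    have r2 : b * (t q * f u₂) = 0 := by rw [← mul_assoc, h2, zero_mul]
    rw [ht, l0, r1, r2, zero_mul]
    norm_num
  · have htpos : 0 < a * t p + b * t q := lt_of_le_of_ne (add_nonneg hatp hbtq) (Ne.symm ht)
    set tt := a * t p + b * t q with htt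
    set w₁ := a * t p / tt with hw₁def
    set w₂ := b * t q / tt with hw₂def
    have hw₁ : 0 ≤ w₁ := div_nonneg hatp htpos.le
    have hw₂ : 0 ≤ w₂ := div_nonneg hbtq htpos.le
    have hwsum : w₁ + w₂ = 1 := by
      rw [hw₁def, hw₂def, ← add_div, htt, div_self ht]
    have hu₁m : u₁ ∈ Set.Ici (0:ℝ) := div_nonneg hxp htp
    have hu₂m : u₂ ∈ Set.Ici (0:ℝ) := div_nonneg hxq htq
    have key := hf.2 hu₁m hu₂m hw₁ hw₂ hwsum
    simp only [smul_eq_mul] at key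
    have harg : (a * x p + b * x q) / tt = w₁ * u₁ + w₂ * u₂ := by
      rw [hp1, hq1, hw₁def, hw₂def]
      field_simp
    rw [harg]
    calc tt * f (w₁ * u₁ + w₂ * u₂) ≤ tt * (w₁ * f u₁ + w₂ * f u₂) :=
          mul_le_mul_of_nonneg_left key htpos.le
      _ = a * (t p * f u₁) + b * (t q * f u₂) := by
          rw [hw₁def, hw₂def]; field_simp

set_option maxHeartbeats 1600000 in
/-- Joint convexity of the subproblem-(19) objective
`G(E,τ,l) = E + μ₁τ − λ₁ τ r₀₁(E/τ) + κc³l³/(T−τ)² + (λ₁−μ₂)l`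
on the feasible set `{0 ≤ E ≤ τ P_max, 0 ≤ τ < T, 0 ≤ l, c l ≤ (T−τ) f_max}`
(with the convention `τ r₀₁(E/τ) = 0` when `τ = 0`, which holds automatically
since division by zero yields zero). -/
theorem stmt_8 (B a μ₁ lam₁ μ₂ κ c T fmax Pmax : ℝ)
    (hB : 0 < B) (ha : 0 < a) (hμ₁ : 0 ≤ μ₁) (hlam₁ : 0 ≤ lam₁)
    (hκ : 0 < κ) (hc : 0 < c) (hT : 0 < T) (hfmax : 0 < fmax) (hPmax : 0 < Pmax) :
    ConvexOn ℝ
      {p : ℝ × ℝ × ℝ | 0 ≤ p.1 ∧ p.1 ≤ p.2.1 * Pmax ∧ 0 ≤ p.2.1 ∧ p.2.1 < T ∧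
        0 ≤ p.2.2 ∧ c * p.2.2 ≤ (T - p.2.1) * fmax}
      (fun p : ℝ × ℝ × ℝ =>
        p.1 + μ₁ * p.2.1 - lam₁ * (p.2.1 * (B * Real.logb 2 (1 + a * (p.1 / p.2.1))))
          + κ * c ^ 3 * p.2.2 ^ 3 / (T - p.2.1) ^ 2 + (lam₁ - μ₂) * p.2.2) := by
  set S : Set (ℝ × ℝ × ℝ) :=
    {p : ℝ × ℝ × ℝ | 0 ≤ p.1 ∧ p.1 ≤ p.2.1 * Pmax ∧ 0 ≤ p.2.1 ∧ p.2.1 < T ∧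
        0 ≤ p.2.2 ∧ c * p.2.2 ≤ (T - p.2.1) * fmax} with hSdef
  -- convexity of the feasible set
  have hSconv : Convex ℝ S := by
    intro p hp q hq ta tb hta htb htab
    obtain ⟨hp1, hp2, hp3, hp4, hp5, hp6⟩ := hp
    obtain ⟨hq1, hq2, hq3, hq4, hq5, hq6⟩ := hq
    simp only [hSdef, Set.mem_setOf_eq, Prod.fst_add, Prod.snd_add, Prod.smul_fst,
      Prod.smul_snd, smul_eq_mul]
    refine ⟨?_, ?_, ?_, ?_, ?_, ?_⟩
    · nlinarith [mul_nonneg hta hp1, mul_nonneg htb hq1]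
    · nlinarith [mul_le_mul_of_nonneg_left hp2 hta, mul_le_mul_of_nonneg_left hq2 htb]
    · nlinarith [mul_nonneg hta hp3, mul_nonneg htb hq3]
    · rcases eq_or_lt_of_le hta with h | h
      · have : tb = 1 := by linarith
        rw [← h, this]; simpa using hq4
      · nlinarith [mul_lt_mul_of_pos_left hp4 h, mul_le_mul_of_nonneg_left hq4.le htb]
    · nlinarith [mul_nonneg hta hp5, mul_nonneg htb hq5]
    · have hTf : (ta + tb) * (T * fmax) = T * fmax := by rw [htab, one_mul]
      nlinarith [mul_le_mul_of_nonneg_left hp6 hta, mul_le_mul_of_nonneg_left hq6 htb, hTf]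
  -- convexity of the core 1-d function for the communication term
  have hlog : ConvexOn ℝ (Set.Ioi 0) (fun y : ℝ => -Real.log y) :=
    strictConcaveOn_log_Ioi.concaveOn.neg
  have hcomp := hlog.comp_affineMap (AffineMap.lineMap (1 : ℝ) (1 + a))
  have hsub : Set.Ici (0:ℝ) ⊆ (AffineMap.lineMap (1 : ℝ) (1 + a)) ⁻¹' Set.Ioi 0 := by
    intro x hx
    simp only [Set.mem_preimage, AffineMap.lineMap_apply, Set.mem_Ioi, smul_eq_mul,
      vsub_eq_sub, vadd_eq_add]
    have : (0:ℝ) ≤ x := hx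
    nlinarith
  have hfun : ConvexOn ℝ (Set.Ici 0) (fun x : ℝ => -Real.log (1 + a * x)) := by
    refine ((hcomp.subset hsub (convex_Ici 0)).congr ?_)
    intro x _
    simp only [Function.comp_apply, AffineMap.lineMap_apply, smul_eq_mul, vsub_eq_sub,
      vadd_eq_add]
    rw [show x * (1 + a - 1) + 1 = 1 + a * x by ring]
  have hc' : (0:ℝ) ≤ lam₁ * B / Real.log 2 :=
    div_nonneg (mul_nonneg hlam₁ hB.le) (Real.log_nonneg one_le_two)
  have hfcore : ConvexOn ℝ (Set.Ici 0)
      (fun x : ℝ => -(lam₁ * (B * Real.logb 2 (1 + a * x)))) := by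
    refine (hfun.smul hc').congr ?_
    intro x _
    simp only [Pi.smul_apply, smul_eq_mul, Real.logb]
    ring
  -- convexity of the core 1-d function for the computing term
  have hfcube : ConvexOn ℝ (Set.Ici 0) (fun x : ℝ => κ * c ^ 3 * x ^ 3) := by
    refine ((convexOn_pow 3).smul (by positivity : (0:ℝ) ≤ κ * c ^ 3)).congr ?_
    intro x _
    simp only [Pi.smul_apply, smul_eq_mul]
  -- perspective terms
  have G2 : ConvexOn ℝ S (fun p : ℝ × ℝ × ℝ =>
      p.2.1 * (-(lam₁ * (B * Real.logb 2 (1 + a * (p.1 / p.2.1)))))) := by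
    refine perspective_general hfcore hSconv (fun p => p.1) (fun p => p.2.1) ?_ ?_
    · intro p q ta tb _ _ _
      obtain ⟨p1, p2, p3⟩ := p
      obtain ⟨q1, q2, q3⟩ := q
      constructor <;> simp [Prod.smul_mk, Prod.mk_add_mk]
    · intro p hp
      obtain ⟨h1, h2, h3, _, _, _⟩ := hp
      refine ⟨h1, h3, fun h0 => le_antisymm ?_ h1⟩
      have h0' : p.2.1 = 0 := h0
      show p.1 ≤ 0
      rw [h0', zero_mul] at h2; exact h2
  have G3 : ConvexOn ℝ S (fun p : ℝ × ℝ × ℝ =>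
      (T - p.2.1) * (κ * c ^ 3 * (p.2.2 / (T - p.2.1)) ^ 3)) := by
    refine perspective_general hfcube hSconv (fun p => p.2.2) (fun p => T - p.2.1) ?_ ?_
    · intro p q ta tb _ _ htab
      obtain ⟨p1, p2, p3⟩ := p
      obtain ⟨q1, q2, q3⟩ := q
      constructor
      · simp [Prod.smul_mk, Prod.mk_add_mk]
      · simp only [Prod.smul_mk, Prod.mk_add_mk, smul_eq_mul]
        linear_combination (-T) * htab
    · intro p hp
      obtain ⟨_, _, _, h4, h5, _⟩ := hp
      refine ⟨h5, ?_, fun h0 => ?_⟩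
      · show (0:ℝ) ≤ T - p.2.1
        linarith
      · have h0' : T - p.2.1 = 0 := h0
        exact absurd h4 (not_lt.2 (by linarith))
  -- affine part
  have hAff : ConvexOn ℝ S (fun p : ℝ × ℝ × ℝ =>
      p.1 + μ₁ * p.2.1 + (lam₁ - μ₂) * p.2.2) := by
    refine ⟨hSconv, ?_⟩
    intro p _ q _ ta tb _ _ _
    simp only [Prod.fst_add, Prod.snd_add, Prod.smul_fst, Prod.smul_snd, smul_eq_mul]
    apply le_of_eq; ring
  -- assemble
  refine ((hAff.add G2).add G3).congr ?_
  intro p hp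
  obtain ⟨_, _, _, h4, _, _⟩ := hp
  have hs : T - p.2.1 ≠ 0 := by intro h; linarith
  simp only [Pi.add_apply]
  field_simp
  ring
end
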